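/- Let q, a, x ∈ ℂ with 0 < |q| < 1, x ≠ 0, and let k, n ∈ ℕ with k ≤ n and 1 - a q^j x ≠ 0 for 0 ≤ j ≤ k - 1. Then the k-th iterate of the q-differential operator applied to the function t ↦ (a t;q)_n, evaluated at x, equals (-a)^k q^{C(k,2)} ((q;q)_n / (q;q)_{n-k}) · ((a x;q)_n / (a x;q)_k). Moreover, if k > n the same k-th iterate evaluated at x equals 0. -/

import Mathlib

/-- The finite q-shifted factorial (a;q)_n = ∏_{j=0}^{n-1} (1 - a q^j). -/
noncomputable def qPoch (q a : ℂ) (n : ℕ) : ℂ :=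
  ∏ j ∈ Finset.range n, (1 - a * q ^ j)

/-- The q-differential operator: (D_q f)(x) = (f(x) - f(qx))/x. -/
noncomputable def Dq (q : ℂ) (f : ℂ → ℂ) : ℂ → ℂ :=
  fun x => (f x - f (q * x)) / x

lemma qPoch_succ (q b : ℂ) (m : ℕ) :
    qPoch q b (m+1) = qPoch q b m * (1 - b * q ^ m) := by
  simp [qPoch, Finset.prod_range_succ]

lemma qPoch_succ' (q b : ℂ) (m : ℕ) :
    qPoch q b (m+1) = (1 - b) * qPoch q (b*q) m := by
  simp only [qPoch, Finset.prod_range_succ']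
  rw [pow_zero, mul_one, mul_comm]
  congr 1
  exact Finset.prod_congr rfl (fun j _ => by rw [pow_succ]; ring)

lemma Dq_key (q A x : ℂ) (hx : x ≠ 0) (m : ℕ) :
    (qPoch q (A*x) m - qPoch q (A*(q*x)) m) / x
      = -A * (1 - q^m) * qPoch q (A*q*x) (m-1) := by
  cases m with
  | zero => simp [qPoch]
  | succ m =>
    have e1 : qPoch q (A*x) (m+1) = (1 - A*x) * qPoch q (A*q*x) m := by
      rw [qPoch_succ']; congr 2; ring
    have e2 : qPoch q (A*(q*x)) (m+1) = qPoch q (A*q*x) m * (1 - A*q*x * q^m) := by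
      rw [show A*(q*x) = A*q*x by ring, qPoch_succ]
    rw [e1, e2, Nat.add_sub_cancel, div_eq_iff hx]
    ring

lemma iter_formula (q a : ℂ) (hq : q ≠ 0) (k n : ℕ) :
    ∀ x : ℂ, x ≠ 0 →
    (Dq q)^[k] (fun t => qPoch q (a*t) n) x
      = (-a)^k * q^(k.choose 2) * (∏ i ∈ Finset.range k, (1 - q^(n-i)))
        * qPoch q (a * q^k * x) (n - k) := by
  induction k with
  | zero => intro x hx; simp
  | succ k ih =>
    intro x hx
    rw [Function.iterate_succ_apply']
    have hqx : q * x ≠ 0 := mul_ne_zero hq hx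
    show ((Dq q)^[k] (fun t => qPoch q (a*t) n) x
        - (Dq q)^[k] (fun t => qPoch q (a*t) n) (q*x)) / x = _
    rw [ih x hx, ih (q*x) hqx]
    set C := (-a)^k * q^(k.choose 2) * (∏ i ∈ Finset.range k, (1 - q^(n-i))) with hC
    have harg1 : a * q^k * x = (a*q^k) * x := by ring
    have harg2 : a * q^k * (q*x) = (a*q^k) * (q*x) := by ring
    rw [harg1, harg2, ← mul_sub, mul_div_assoc, Dq_key q (a*q^k) x hx (n-k)]
    have hch : (k+1).choose 2 = k.choose 2 + k := by
      rw [Nat.choose_two_right, Nat.choose_two_right]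
      rcases k with _ | k
      · simp
      · simp [Nat.succ_sub_one]; ring_nf; omega
    rw [Finset.prod_range_succ, hch, Nat.sub_sub, pow_add, pow_succ]
    have harg3 : a * q ^ k * q * x = a * q ^ (k+1) * x := by rw [pow_succ]; ring
    rw [harg3, hC]
    ring

lemma qPoch_q_ne_zero (q : ℂ) (hq1 : ‖q‖ < 1) (m : ℕ) :
    qPoch q q m ≠ 0 := by
  unfold qPoch
  apply Finset.prod_ne_zero_iff.mpr
  intro j _
  intro hzero
  have h1 : q * q ^ j = 1 := by linear_combination -hzero
  have : ‖q * q ^ j‖ < 1 := by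
    rw [norm_mul, norm_pow]
    calc ‖q‖ * ‖q‖ ^ j ≤ ‖q‖ * 1 := by
          apply mul_le_mul_of_nonneg_left _ (norm_nonneg q)
          exact pow_le_one₀ (norm_nonneg q) hq1.le
      _ < 1 := by simpa using hq1
  rw [h1] at this; simp at this

theorem stmt19 (q a x : ℂ) (hq0 : 0 < ‖q‖) (hq1 : ‖q‖ < 1)
    (hx : x ≠ 0) (k n : ℕ)
    (h : ∀ j : ℕ, j < k → 1 - a * q ^ j * x ≠ 0) :
    (k ≤ n →
      (Dq q)^[k] (fun t => qPoch q (a * t) n) x =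
        (-a) ^ k * q ^ (k.choose 2) * (qPoch q q n / qPoch q q (n - k)) *
          (qPoch q (a * x) n / qPoch q (a * x) k)) ∧
    (n < k → (Dq q)^[k] (fun t => qPoch q (a * t) n) x = 0) := by
  have hq : q ≠ 0 := by
    intro h0; rw [h0] at hq0; simp at hq0
  have main := iter_formula q a hq k n x hx
  constructor
  · intro hk
    rw [main]
    have hden1 : qPoch q q (n-k) ≠ 0 := qPoch_q_ne_zero q hq1 (n-k)
    have hden2 : qPoch q (a*x) k ≠ 0 := by
      unfold qPoch
      apply Finset.prod_ne_zero_iff.mpr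
      intro j hj
      have := h j (Finset.mem_range.mp hj)
      intro hzero
      apply this
      linear_combination hzero
    have eq1 : qPoch q q n = qPoch q q (n-k) * ∏ i ∈ Finset.range k, (1 - q^(n-i)) := by
      conv_lhs => rw [show n = (n-k)+k from (Nat.sub_add_cancel hk).symm]
      unfold qPoch
      rw [Finset.prod_range_add]
      congr 1
      rw [← Finset.prod_range_reflect]
      apply Finset.prod_congr rfl
      intro i hi
      have hi' : i < k := Finset.mem_range.mp hi
      rw [← pow_succ']
      congr 2
      omega
    have eq2 : qPoch q (a*x) n = qPoch q (a*x) k * qPoch q (a*q^k*x) (n-k) := by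
      conv_lhs => rw [show n = k+(n-k) from (Nat.add_sub_cancel' hk).symm]
      unfold qPoch
      rw [Finset.prod_range_add]
      congr 1
      apply Finset.prod_congr rfl
      intro i _
      rw [pow_add]
      ring_nf
    rw [eq1, eq2]
    field_simp
  · intro hnk
    rw [main]
    have : (∏ i ∈ Finset.range k, (1 - q^(n-i))) = 0 := by
      apply Finset.prod_eq_zero (Finset.mem_range.mpr hnk)
      simp
    simp [this]
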